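/- Let B and C be the central binomial and Catalan generating functions over ℚ, let T₀ = C·(C ∘ (zC²)), and define V_N = B·C⁻¹·T₀·(1 − z·((1 − z(C+T₀))⁻¹)²)⁻¹ (all inverses exist since the relevant power series have nonzero constant term). Then V_N satisfies the algebraic identity V_N²·(4 − 25z)·(1 − 4z) = 2 − 5z + 2·B⁻¹; that is, V_N = √((2 − 5z + 2√(1−4z))/((4−25z)(1−4z))) since B⁻¹ = √(1−4z). -/

import Mathlib

open PowerSeries Finset

/-- The central binomial generating function `B = ∑ binom(2n,n) zⁿ` over `ℚ`. -/
noncomputable def Bgf : PowerSeries ℚ := PowerSeries.mk fun n => ((2 * n).choose n : ℚ)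

/-- The Catalan generating function `C = ∑ Cₙ zⁿ` over `ℚ`. -/
noncomputable def Cgf : PowerSeries ℚ := PowerSeries.mk fun n => (catalan n : ℚ)

/-- Composition `F ∘ a` of formal power series (intended for `a` with zero constant
term, in which case only the terms with `k ≤ n` contribute to the coefficient of `zⁿ`
in `∑ₖ ([zᵏ]F)·aᵏ`, so the finite sum below is the full composition). -/
noncomputable def PScomp (F a : PowerSeries ℚ) : PowerSeries ℚ :=
  PowerSeries.mk fun n => ∑ k ∈ Finset.range (n + 1),
    PowerSeries.coeff k F * PowerSeries.coeff n (a ^ k)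

/-- `T₀ = C·(C ∘ (zC²))`, the generating function for ENT trees with mutator at the root. -/
noncomputable def T₀ : PowerSeries ℚ := Cgf * PScomp Cgf (PowerSeries.X * Cgf ^ 2)

/-- `V_N = (B/C)·T₀·(1 − z/(1 − z(C+T₀))²)⁻¹`, the generating function for new type
vertices of embedded new type trees. -/
noncomputable def VN : PowerSeries ℚ :=
  Bgf * Cgf⁻¹ * T₀ *
    (1 - PowerSeries.X * ((1 - PowerSeries.X * (Cgf + T₀))⁻¹) ^ 2)⁻¹

/-! ### Auxiliary lemmas -/

lemma coeff_pow_of_lt {a : PowerSeries ℚ} (ha : constantCoeff a = 0) {n k : ℕ}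
    (h : n < k) : coeff n (a ^ k) = 0 := by
  obtain ⟨b, rfl⟩ := PowerSeries.X_dvd_iff.mpr ha
  rw [mul_pow, PowerSeries.coeff_X_pow_mul', if_neg (by omega)]

lemma PScomp_one (a : PowerSeries ℚ) : PScomp 1 a = 1 := by
  ext n
  simp only [PScomp, coeff_mk, PowerSeries.coeff_one, ite_mul, zero_mul, one_mul]
  rw [Finset.sum_ite_eq' (Finset.range (n+1)) 0 (fun k => coeff n (a ^ k)),
    if_pos (by simp)]
  simp [PowerSeries.coeff_one]

lemma PScomp_X {a : PowerSeries ℚ} (ha : constantCoeff a = 0) : PScomp X a = a := by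
  ext n
  simp only [PScomp, coeff_mk, PowerSeries.coeff_X, ite_mul, zero_mul, one_mul]
  rw [Finset.sum_ite_eq' (Finset.range (n+1)) 1 (fun k => coeff n (a ^ k))]
  rcases Nat.eq_zero_or_pos n with rfl | hn
  · rw [if_neg (by simp)]
    rw [PowerSeries.coeff_zero_eq_constantCoeff, ha]
  · rw [if_pos (by simp; omega), pow_one]

lemma PScomp_add (F G a : PowerSeries ℚ) : PScomp (F + G) a = PScomp F a + PScomp G a := by
  ext n
  simp [PScomp, add_mul, Finset.sum_add_distrib]

lemma PScomp_mul (F G : PowerSeries ℚ) {a : PowerSeries ℚ} (ha : constantCoeff a = 0) :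
    PScomp (F * G) a = PScomp F a * PScomp G a := by
  ext n
  have hext : ∀ (H : PowerSeries ℚ) (m : ℕ), m ≤ n →
      (∑ k ∈ Finset.range (m+1), coeff k H * coeff m (a^k))
      = ∑ k ∈ Finset.range (n+1), coeff k H * coeff m (a^k) := by
    intro H m hm
    apply Finset.sum_subset
    · intro x hx
      simp only [Finset.mem_range] at *
      omega
    · intro x hx hxn
      simp only [Finset.mem_range] at hx hxn
      rw [coeff_pow_of_lt ha (by omega), mul_zero]
  have key : ∀ (φ : ℕ × ℕ → ℚ), (∀ p : ℕ × ℕ, n < p.1 + p.2 → φ p = 0) →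
      (∑ k ∈ Finset.range (n+1), ∑ p ∈ antidiagonal k, φ p)
      = ∑ i ∈ Finset.range (n+1), ∑ j ∈ Finset.range (n+1), φ (i, j) := by
    intro φ hφ
    rw [← Finset.sum_product']
    rw [← Finset.sum_filter_of_ne
      (p := fun p : ℕ × ℕ => p.1 + p.2 ≤ n)
      (f := φ) (s := Finset.range (n+1) ×ˢ Finset.range (n+1))
      (by intro p _ hp; by_contra hc; exact hp (hφ p (by omega)))]
    rw [Finset.sum_sigma']
    refine Finset.sum_nbij' (fun x => x.2) (fun p => ⟨p.1 + p.2, p⟩) ?_ ?_ ?_ ?_ ?_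
    · rintro ⟨k, p⟩ hx
      simp only [Finset.mem_sigma, Finset.mem_range, Finset.HasAntidiagonal.mem_antidiagonal] at hx
      simp only [Finset.mem_filter, Finset.mem_product, Finset.mem_range]
      omega
    · intro p hp
      simp only [Finset.mem_filter, Finset.mem_product, Finset.mem_range] at hp
      simp only [Finset.mem_sigma, Finset.mem_range, Finset.HasAntidiagonal.mem_antidiagonal]
      exact ⟨by omega, trivial⟩
    · rintro ⟨k, p⟩ hx
      simp only [Finset.mem_sigma, Finset.mem_range, Finset.HasAntidiagonal.mem_antidiagonal] at hx
      simp [hx.2]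
    · intro p hp; rfl
    · intro x hx; rfl
  calc coeff n (PScomp (F * G) a)
      = ∑ k ∈ Finset.range (n+1), ∑ p ∈ antidiagonal k,
          coeff p.1 F * coeff p.2 G * coeff n (a ^ (p.1 + p.2)) := by
        simp only [PScomp, coeff_mk]
        refine Finset.sum_congr rfl fun k hk => ?_
        rw [PowerSeries.coeff_mul, Finset.sum_mul]
        refine Finset.sum_congr rfl fun p hp => ?_
        rw [mem_antidiagonal.mp hp]
    _ = ∑ i ∈ Finset.range (n+1), ∑ j ∈ Finset.range (n+1),
          coeff i F * coeff j G * coeff n (a ^ (i + j)) := by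
        refine key _ fun p hp => ?_
        rw [coeff_pow_of_lt ha hp, mul_zero]
    _ = ∑ i ∈ Finset.range (n+1), ∑ j ∈ Finset.range (n+1),
          coeff i F * coeff j G *
            (∑ p ∈ antidiagonal n, coeff p.1 (a ^ i) * coeff p.2 (a ^ j)) := by
        refine Finset.sum_congr rfl fun i _ => Finset.sum_congr rfl fun j _ => ?_
        rw [← PowerSeries.coeff_mul, ← pow_add]
    _ = ∑ i ∈ Finset.range (n+1), ∑ j ∈ Finset.range (n+1), ∑ p ∈ antidiagonal n,
          coeff i F * coeff j G * (coeff p.1 (a ^ i) * coeff p.2 (a ^ j)) := by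
        simp_rw [Finset.mul_sum]
    _ = ∑ i ∈ Finset.range (n+1), ∑ p ∈ antidiagonal n, ∑ j ∈ Finset.range (n+1),
          coeff i F * coeff j G * (coeff p.1 (a ^ i) * coeff p.2 (a ^ j)) := by
        exact Finset.sum_congr rfl fun i _ => Finset.sum_comm
    _ = ∑ p ∈ antidiagonal n, ∑ i ∈ Finset.range (n+1), ∑ j ∈ Finset.range (n+1),
          coeff i F * coeff j G * (coeff p.1 (a ^ i) * coeff p.2 (a ^ j)) := by
        exact Finset.sum_comm
    _ = ∑ p ∈ antidiagonal n,
          (∑ i ∈ Finset.range (n+1), coeff i F * coeff p.1 (a ^ i)) *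
          (∑ j ∈ Finset.range (n+1), coeff j G * coeff p.2 (a ^ j)) := by
        refine Finset.sum_congr rfl fun p _ => ?_
        rw [Finset.sum_mul_sum]
        exact Finset.sum_congr rfl fun i _ => Finset.sum_congr rfl fun j _ => by ring
    _ = coeff n (PScomp F a * PScomp G a) := by
        rw [PowerSeries.coeff_mul]
        refine Finset.sum_congr rfl fun p hp => ?_
        have h1 : p.1 ≤ n := by
          have := mem_antidiagonal.mp hp; omega
        have h2 : p.2 ≤ n := by
          have := mem_antidiagonal.mp hp; omega
        simp only [PScomp, coeff_mk]
        rw [hext F p.1 h1, hext G p.2 h2]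

lemma hC1 : Cgf = 1 + X * Cgf ^ 2 := by
  ext n
  rw [map_add, PowerSeries.coeff_one]
  cases n with
  | zero => simp [Cgf]
  | succ n =>
    rw [if_neg (Nat.succ_ne_zero n), zero_add, sq, PowerSeries.coeff_succ_X_mul,
      PowerSeries.coeff_mul]
    simp only [Cgf, coeff_mk]
    rw [catalan_succ']
    push_cast
    rfl

lemma PScomp_Cgf_quad {a : PowerSeries ℚ} (ha : constantCoeff a = 0) :
    PScomp Cgf a = 1 + a * (PScomp Cgf a) ^ 2 := by
  conv_lhs => rw [hC1]
  rw [PScomp_add, PScomp_one, PScomp_mul X (Cgf ^ 2) ha, PScomp_X ha, sq Cgf,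
    PScomp_mul Cgf Cgf ha]
  ring

lemma hB1 : Bgf = Cgf + X * (d⁄dX ℚ Cgf) := by
  ext n
  rw [map_add]
  cases n with
  | zero => simp [Bgf, Cgf]
  | succ n =>
    rw [PowerSeries.coeff_succ_X_mul, PowerSeries.coeff_derivative]
    simp only [Bgf, Cgf, coeff_mk]
    have h := succ_mul_catalan_eq_centralBinom (n+1)
    rw [Nat.centralBinom] at h
    have : ((2 * (n+1)).choose (n+1) : ℚ) = ((n+1)+1 : ℕ) * (catalan (n+1) : ℕ) := by
      exact_mod_cast h.symm
    rw [this]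
    push_cast
    ring

lemma bigP {R : Type*} [CommRing R] (x c d : R) (h1 : x * c ^ 2 = c - 1)
    (h2 : (c - 1) * d ^ 2 = d - 1) :
    c^2 * (d^2*(4-25*x)*c^9*(1-x*(c+c*d))^4)
      = ((2-5*x)*c + 2*(2-c)) * (((1-x*(c+c*d))^2-x)^2*c^10) := by
  linear_combination ((-25:R)*x^4*c^13*d^6 + (-100:R)*x^4*c^13*d^5 + (-145:R)*x^4*c^13*d^4 + (-80:R)*x^4*c^13*d^3 + (5:R)*x^4*c^13*d^2 + (20:R)*x^4*c^13*d + (5:R)*x^4*c^13 + (4:R)*x^3*c^13*d^6 + (16:R)*x^3*c^13*d^5 + (24:R)*x^3*c^13*d^4 + (16:R)*x^3*c^13*d^3 + (4:R)*x^3*c^13*d^2 + (-25:R)*x^3*c^12*d^6 + (151:R)*x^3*c^12*d^4 + (184:R)*x^3*c^12*d^3 + (21:R)*x^3*c^12*d^2 + (-56:R)*x^3*c^12*d + (-19:R)*x^3*c^12 + (25:R)*x^3*c^11*d^6 + (100:R)*x^3*c^11*d^5 + (145:R)*x^3*c^11*d^4 + (80:R)*x^3*c^11*d^3 + (-15:R)*x^3*c^11*d^2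 + (-40:R)*x^3*c^11*d + (-15:R)*x^3*c^11 + (4:R)*x^2*c^12*d^6 + (-24:R)*x^2*c^12*d^4 + (-32:R)*x^2*c^12*d^3 + (-12:R)*x^2*c^12*d^2 + (-29:R)*x^2*c^11*d^6 + (-16:R)*x^2*c^11*d^5 + (-23:R)*x^2*c^11*d^4 + (-116:R)*x^2*c^11*d^3 + (-55:R)*x^2*c^11*d^2 + (52:R)*x^2*c^11*d + (27:R)*x^2*c^11 + (50:R)*x^2*c^10*d^6 + (100:R)*x^2*c^10*d^5 + (-6:R)*x^2*c^10*d^4 + (-104:R)*x^2*c^10*d^3 + (-28:R)*x^2*c^10*d^2 + (52:R)*x^2*c^10*d + (32:R)*x^2*c^10 + (-25:R)*x^2*c^9*d^6 + (-100:R)*x^2*c^9*d^5 + (-145:R)*x^2*c^9*d^4 + (-80:R)*x^2*c^9*d^3 + (15:R)*x^2*c^9*d^2 + (40:R)*x^2*c^9*d + (20:R)*x^2*c^9 + (4:R)*x*c^11*d^6 + (16:R)*x*c^11*d^3 + (12:R)*x*c^11*d^2 + (-33:R)*x*c^10*d^6 + (-16:R)*x*c^10*d^5 + (1:R)*x*c^10*d^4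 + (16:R)*x*c^10*d^3 + (33:R)*x*c^10*d^2 + (-16:R)*x*c^10*d + (-17:R)*x*c^10 + (79:R)*x*c^9*d^6 + (116:R)*x*c^9*d^5 + (17:R)*x*c^9*d^4 + (12:R)*x*c^9*d^3 + (27:R)*x*c^9*d^2 + (-16:R)*x*c^9*d + (-21:R)*x*c^9 + (-75:R)*x*c^8*d^6 + (-200:R)*x*c^8*d^5 + (-139:R)*x*c^8*d^4 + (24:R)*x*c^8*d^3 + (43:R)*x*c^8*d^2 + (-12:R)*x*c^8*d + (-16:R)*x*c^8 + (25:R)*x*c^7*d^6 + (100:R)*x*c^7*d^5 + (145:R)*x*c^7*d^4 + (80:R)*x*c^7*d^3 + (-15:R)*x*c^7*d^2 + (-40:R)*x*c^7*d + (-20:R)*x*c^7 + (4:R)*c^10*d^6 + (-4:R)*c^10*d^2 + (-37:R)*c^9*d^6 + (-16:R)*c^9*d^5 + (1:R)*c^9*d^4 + (-4:R)*c^9*d^2 + (4:R)*c^9 + (112:R)*c^8*d^6 + (132:R)*c^8*d^5 + (16:R)*c^8*d^4 + (-4:R)*c^8*d^3 + (-6:R)*c^8*d^2 + (4:R)*c^8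 + (-154:R)*c^7*d^6 + (-316:R)*c^7*d^5 + (-156:R)*c^7*d^4 + (12:R)*c^7*d^3 + (16:R)*c^7*d^2 + (4:R)*c^7*d + (5:R)*c^7 + (100:R)*c^6*d^6 + (300:R)*c^6*d^5 + (284:R)*c^6*d^4 + (56:R)*c^6*d^3 + (-58:R)*c^6*d^2 + (-28:R)*c^6*d + (-4:R)*c^6 + (-25:R)*c^5*d^6 + (-100:R)*c^5*d^5 + (-145:R)*c^5*d^4 + (-80:R)*c^5*d^3 + (15:R)*c^5*d^2 + (40:R)*c^5*d + (20:R)*c^5)*h1 + ((4:R)*c^10*d^4 + (-37:R)*c^9*d^4 + (-12:R)*c^9*d^3 + (-3:R)*c^9*d^2 + (112:R)*c^8*d^4 + (99:R)*c^8*d^3 + (37:R)*c^8*d^2 + (5:R)*c^8*d + (1:R)*c^8 + (-154:R)*c^7*d^4 + (-237:R)*c^7*d^3 + (-148:R)*c^7*d^2 + (-41:R)*c^7*d + (-9:R)*c^7 + (100:R)*c^6*d^4 + (225:R)*c^6*d^3 + (209:R)*c^6*d^2 + (92:R)*c^6*d + (24:R)*c^6 + (-25:R)*c^5*d^4 + (-75:R)*c^5*d^3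 + (-95:R)*c^5*d^2 + (-60:R)*c^5*d + (-20:R)*c^5)*h2

/-- `V_N² (4 − 25z)(1 − 4z) = 2 − 5z + 2·B⁻¹`, i.e.
`V_N = √((2 − 5z + 2√(1−4z))/((4−25z)(1−4z)))` since `B⁻¹ = √(1−4z)`. -/
theorem stmt10 :
    VN ^ 2 * (4 - 25 * PowerSeries.X) * (1 - 4 * PowerSeries.X) =
      2 - 5 * PowerSeries.X + 2 * Bgf⁻¹ := by
  have ha : constantCoeff (X * Cgf ^ 2) = 0 := by simp
  set Dv := PScomp Cgf (X * Cgf ^ 2) with hDv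
  have hT : T₀ = Cgf * Dv := rfl
  have hX : X * Cgf ^ 2 = Cgf - 1 := by linear_combination -hC1
  have hD : Dv = 1 + (X * Cgf ^ 2) * Dv ^ 2 := PScomp_Cgf_quad ha
  have hD2 : (Cgf - 1) * Dv ^ 2 = Dv - 1 := by linear_combination -hD - Dv ^ 2 * hX
  have hC0 : constantCoeff Cgf = 1 := by
    simp [Cgf, PowerSeries.constantCoeff_mk]
  have hB0 : constantCoeff Bgf = 1 := by
    simp [Bgf, PowerSeries.constantCoeff_mk]
  have hQ0 : constantCoeff (1 - X * (Cgf + Cgf * Dv)) = 1 := by simp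
  have hW0 : constantCoeff (1 - X * ((1 - X * (Cgf + Cgf * Dv))⁻¹) ^ 2) = 1 := by simp
  have hCi : Cgf * Cgf⁻¹ = 1 := PowerSeries.mul_inv_cancel _ (by rw [hC0]; norm_num)
  have hBi : Bgf * Bgf⁻¹ = 1 := PowerSeries.mul_inv_cancel _ (by rw [hB0]; norm_num)
  have hQi : (1 - X * (Cgf + Cgf * Dv)) * (1 - X * (Cgf + Cgf * Dv))⁻¹ = 1 :=
    PowerSeries.mul_inv_cancel _ (by rw [hQ0]; norm_num)
  have hWi : (1 - X * ((1 - X * (Cgf + Cgf * Dv))⁻¹) ^ 2) *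
      (1 - X * ((1 - X * (Cgf + Cgf * Dv))⁻¹) ^ 2)⁻¹ = 1 :=
    PowerSeries.mul_inv_cancel _ (by rw [hW0]; norm_num)
  have hC' : d⁄dX ℚ Cgf = Cgf ^ 2 + 2 * X * Cgf * (d⁄dX ℚ Cgf) := by
    conv_lhs => rw [hC1]
    rw [map_add, Derivation.leibniz, Derivation.leibniz_pow, PowerSeries.derivative_X]
    simp only [smul_eq_mul, Derivation.map_one_eq_zero]
    ring
  have hBC : Bgf * (2 - Cgf) = Cgf := by
    rw [hB1]
    linear_combination (2 * X * (d⁄dX ℚ Cgf) + Cgf) * hX + X * Cgf * hC'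
  have hB2 : Bgf ^ 2 * (1 - 4 * X) * Cgf ^ 2 = Cgf ^ 2 := by
    have hsq : (2 - Cgf) ^ 2 = Cgf ^ 2 * (1 - 4 * X) := by linear_combination 4 * hX
    linear_combination (-(Bgf ^ 2)) * hsq + (Bgf * (2 - Cgf) + Cgf) * hBC
  have hBiC : Bgf⁻¹ * Cgf = 2 - Cgf := by
    linear_combination (-(Bgf⁻¹)) * hBC + (2 - Cgf) * hBi
  have hQW : (1 - X * ((1 - X * (Cgf + Cgf * Dv))⁻¹) ^ 2) * (1 - X * (Cgf + Cgf * Dv)) ^ 2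
      = (1 - X * (Cgf + Cgf * Dv)) ^ 2 - X := by
    linear_combination
      (-(X) * ((1 - X * (Cgf + Cgf * Dv)) * (1 - X * (Cgf + Cgf * Dv))⁻¹ + 1)) * hQi
  have hKey : VN * (1 - X * ((1 - X * (Cgf + Cgf * Dv))⁻¹) ^ 2) * Cgf = Bgf * Cgf * Dv := by
    rw [VN, hT]
    linear_combination (Bgf * Cgf * Dv * (Cgf⁻¹ * Cgf)) * hWi + (Bgf * Cgf * Dv) * hCi
  have hM0 : (Cgf ^ 11 * (1 - X * (Cgf + Cgf * Dv)) ^ 4 *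
      (1 - X * ((1 - X * (Cgf + Cgf * Dv))⁻¹) ^ 2) ^ 2) ≠ 0 := by
    intro h
    have hcc : constantCoeff (Cgf ^ 11 * (1 - X * (Cgf + Cgf * Dv)) ^ 4 *
        (1 - X * ((1 - X * (Cgf + Cgf * Dv))⁻¹) ^ 2) ^ 2) = 1 := by
      rw [map_mul, map_mul, map_pow, map_pow, map_pow, hC0, hQ0, hW0]
      norm_num
    rw [h, map_zero] at hcc
    exact zero_ne_one hcc
  refine mul_right_cancel₀ hM0 ?_
  calc VN ^ 2 * (4 - 25 * X) * (1 - 4 * X) * (Cgf ^ 11 * (1 - X * (Cgf + Cgf * Dv)) ^ 4 *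
        (1 - X * ((1 - X * (Cgf + Cgf * Dv))⁻¹) ^ 2) ^ 2)
      = (VN * (1 - X * ((1 - X * (Cgf + Cgf * Dv))⁻¹) ^ 2) * Cgf) ^ 2 *
        ((4 - 25 * X) * (1 - 4 * X) * (Cgf ^ 9 * (1 - X * (Cgf + Cgf * Dv)) ^ 4)) := by ring
    _ = (Bgf * Cgf * Dv) ^ 2 *
        ((4 - 25 * X) * (1 - 4 * X) * (Cgf ^ 9 * (1 - X * (Cgf + Cgf * Dv)) ^ 4)) := by
        rw [hKey]
    _ = (Bgf ^ 2 * (1 - 4 * X) * Cgf ^ 2) *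
        (Dv ^ 2 * (4 - 25 * X) * Cgf ^ 9 * (1 - X * (Cgf + Cgf * Dv)) ^ 4) := by ring
    _ = Cgf ^ 2 * (Dv ^ 2 * (4 - 25 * X) * Cgf ^ 9 * (1 - X * (Cgf + Cgf * Dv)) ^ 4) := by
        rw [hB2]
    _ = ((2 - 5 * X) * Cgf + 2 * (2 - Cgf)) *
        (((1 - X * (Cgf + Cgf * Dv)) ^ 2 - X) ^ 2 * Cgf ^ 10) := bigP X Cgf Dv hX hD2
    _ = ((2 - 5 * X) * Cgf + 2 * (Bgf⁻¹ * Cgf)) *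
        (((1 - X * ((1 - X * (Cgf + Cgf * Dv))⁻¹) ^ 2) * (1 - X * (Cgf + Cgf * Dv)) ^ 2) ^ 2 *
          Cgf ^ 10) := by rw [hQW, hBiC]
    _ = (2 - 5 * X + 2 * Bgf⁻¹) * (Cgf ^ 11 * (1 - X * (Cgf + Cgf * Dv)) ^ 4 *
        (1 - X * ((1 - X * (Cgf + Cgf * Dv))⁻¹) ^ 2) ^ 2) := by ring
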